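/- Let 0 < d₁ < d₂ and let f ∈ W^{1,1}(𝕊¹;𝕊¹) with deg f = d₁ satisfy f ∧ f' > 0 almost everywhere. Then for every g ∈ W^{1,1}(𝕊¹;𝕊¹) with deg g = d₂, the strict inequality ∫_{𝕊¹}|f' - g'| > 2π(d₂ - d₁) holds; in particular the infimum inf_g ∫|f'-g'| = 2π(d₂-d₁) is not attained. -/

import Mathlib

open Real MeasureTheory

/-- `f = e^{iφ}` is a `W^{1,1}` map `𝕊¹ → 𝕊¹` of degree `d`, with phase `φ` and integrable
weak derivative `φ'` of the phase. Note `f ∧ f' = φ'` pointwise a.e. -/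
def MemE (d : ℤ) (φ φ' : ℝ → ℝ) : Prop :=
  (∀ θ : ℝ, φ (θ + 2 * π) = φ θ + 2 * π * d) ∧
  (∀ a b : ℝ, IntervalIntegrable φ' volume a b) ∧
  (∀ a b : ℝ, φ b - φ a = ∫ t in a..b, φ' t)

/-- The `W^{1,1}` seminorm distance `∫_{𝕊¹} |f' - g'|`. -/
noncomputable def dist11 (φ φ' ψ ψ' : ℝ → ℝ) : ℝ :=
  ∫ θ in (0:ℝ)..(2 * π),
    ‖Complex.I * (φ' θ : ℂ) * Complex.exp (Complex.I * (φ θ : ℂ)) -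
      Complex.I * (ψ' θ : ℂ) * Complex.exp (Complex.I * (ψ θ : ℂ))‖

lemma exp_I_norm (a : ℝ) : ‖Complex.exp (Complex.I*(a:ℂ))‖ = 1 := by
  rw [mul_comm]; exact Complex.norm_exp_ofReal_mul_I a

lemma normA (p q a b : ℝ) (hp : 0 ≤ p) :
    q - p ≤ ‖Complex.I * (p:ℂ) * Complex.exp (Complex.I*(a:ℂ)) - Complex.I * (q:ℂ) * Complex.exp (Complex.I*(b:ℂ))‖ := by
  have h1 : ‖Complex.I * (p:ℂ) * Complex.exp (Complex.I*(a:ℂ))‖ = |p| := by simp [exp_I_norm]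
  have h2 : ‖Complex.I * (q:ℂ) * Complex.exp (Complex.I*(b:ℂ))‖ = |q| := by simp [exp_I_norm]
  have := norm_sub_norm_le (Complex.I * (q:ℂ) * Complex.exp (Complex.I*(b:ℂ))) (Complex.I * (p:ℂ) * Complex.exp (Complex.I*(a:ℂ)))
  rw [norm_sub_rev, h1, h2] at this
  have hq : q ≤ |q| := le_abs_self q
  have hpp : |p| = p := abs_of_nonneg hp
  linarith

lemma normB (p q a b : ℝ) (hp : 0 < p)
    (h : ‖Complex.I * (p:ℂ) * Complex.exp (Complex.I*(a:ℂ)) - Complex.I * (q:ℂ) * Complex.exp (Complex.I*(b:ℂ))‖ = q - p) :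
    Real.cos (b - a) = 1 := by
  set z := Complex.I * (p:ℂ) * Complex.exp (Complex.I*(a:ℂ)) - Complex.I * (q:ℂ) * Complex.exp (Complex.I*(b:ℂ)) with hz
  have hsq : Complex.normSq z = (q-p)^2 := by
    rw [← Complex.sq_norm]; rw [show ‖z‖ = q - p from h]
  have hns : Complex.normSq z = p^2 + q^2 - 2*p*q*Real.cos (b-a) := by
    rw [hz, mul_comm Complex.I (a:ℂ), mul_comm Complex.I (b:ℂ), Complex.exp_mul_I, Complex.exp_mul_I]
    simp [Complex.normSq_apply, Real.cos_sub, Complex.cos_ofReal_re, Complex.sin_ofReal_re]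
    nlinarith [Real.sin_sq_add_cos_sq a, Real.sin_sq_add_cos_sq b]
  have hq : p ≤ q := by have := norm_nonneg z; rw [h] at this; linarith
  have hcos : Real.cos (b-a) ≤ 1 := Real.cos_le_one _
  nlinarith [mul_pos hp (lt_of_lt_of_le hp hq)]

lemma memE_continuous {d : ℤ} {φ φ' : ℝ → ℝ} (h : MemE d φ φ') : Continuous φ := by
  have h1 : Continuous fun b => φ 0 + ∫ t in (0:ℝ)..b, φ' t :=
    continuous_const.add (intervalIntegral.continuous_primitive h.2.1 0)
  refine h1.congr fun b => ?_
  have := h.2.2 0 b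
  linarith

lemma key (d₁ d₂ : ℤ) (h₁ : 0 < d₁) (h₂ : d₁ < d₂) (φ φ' : ℝ → ℝ)
    (hφ : MemE d₁ φ φ')
    (hpos : ∀ᵐ θ ∂(volume : Measure ℝ), θ ∈ Set.Ioo 0 (2 * π) → 0 < φ' θ)
    (ψ ψ' : ℝ → ℝ) (hψ : MemE d₂ ψ ψ') :
    2 * π * ((d₂ : ℝ) - (d₁ : ℝ)) < dist11 φ φ' ψ ψ' := by
  have hπ : (0:ℝ) < 2 * π := by positivity
  have hφc : Continuous φ := memE_continuous hφ
  have hψc : Continuous ψ := memE_continuous hψ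
  set F : ℝ → ℝ := fun θ =>
    ‖Complex.I * (φ' θ : ℂ) * Complex.exp (Complex.I * (φ θ : ℂ)) -
      Complex.I * (ψ' θ : ℂ) * Complex.exp (Complex.I * (ψ θ : ℂ))‖ with hF
  set G : ℝ → ℝ := fun θ => ψ' θ - φ' θ with hG
  -- integral of G
  have hGint : IntervalIntegrable G volume 0 (2*π) := (hψ.2.1 0 (2*π)).sub (hφ.2.1 0 (2*π))
  have hGval : (∫ θ in (0:ℝ)..(2*π), G θ) = 2 * π * ((d₂:ℝ) - d₁) := by
    rw [hG]
    rw [intervalIntegral.integral_sub (hψ.2.1 0 (2*π)) (hφ.2.1 0 (2*π))]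
    have e1 : (∫ t in (0:ℝ)..(2*π), ψ' t) = ψ (2*π) - ψ 0 := (hψ.2.2 0 (2*π)).symm
    have e2 : (∫ t in (0:ℝ)..(2*π), φ' t) = φ (2*π) - φ 0 := (hφ.2.2 0 (2*π)).symm
    have p1 := hψ.1 0
    have p2 := hφ.1 0
    simp only [zero_add] at p1 p2
    rw [e1, e2, p1, p2]; ring
  -- integrability of F
  have hφ'm : AEStronglyMeasurable φ' (volume.restrict (Set.Ioc 0 (2*π))) := (hφ.2.1 0 (2*π)).1.aestronglyMeasurable
  have hψ'm : AEStronglyMeasurable ψ' (volume.restrict (Set.Ioc 0 (2*π))) := (hψ.2.1 0 (2*π)).1.aestronglyMeasurable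
  have hXm : AEStronglyMeasurable (fun θ => Complex.I * (φ' θ : ℂ) * Complex.exp (Complex.I * (φ θ : ℂ))) (volume.restrict (Set.Ioc 0 (2*π))) := by
    exact (aestronglyMeasurable_const.mul (Complex.continuous_ofReal.comp_aestronglyMeasurable hφ'm)).mul
      ((Complex.continuous_exp.comp (continuous_const.mul (Complex.continuous_ofReal.comp hφc))).aestronglyMeasurable)
  have hYm : AEStronglyMeasurable (fun θ => Complex.I * (ψ' θ : ℂ) * Complex.exp (Complex.I * (ψ θ : ℂ))) (volume.restrict (Set.Ioc 0 (2*π))) := by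
    exact (aestronglyMeasurable_const.mul (Complex.continuous_ofReal.comp_aestronglyMeasurable hψ'm)).mul
      ((Complex.continuous_exp.comp (continuous_const.mul (Complex.continuous_ofReal.comp hψc))).aestronglyMeasurable)
  have hFm : AEStronglyMeasurable F (volume.restrict (Set.Ioc 0 (2*π))) := (hXm.sub hYm).norm
  have hFbd : ∀ θ, ‖F θ‖ ≤ |φ' θ| + |ψ' θ| := by
    intro θ
    rw [hF, norm_norm]
    refine (norm_sub_le _ _).trans ?_
    have h1 : ‖Complex.I * (φ' θ:ℂ) * Complex.exp (Complex.I*(φ θ:ℂ))‖ = |φ' θ| := by simp [exp_I_norm]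
    have h2 : ‖Complex.I * (ψ' θ:ℂ) * Complex.exp (Complex.I*(ψ θ:ℂ))‖ = |ψ' θ| := by simp [exp_I_norm]
    rw [h1, h2]
  have hbint : IntegrableOn (fun θ => |φ' θ| + |ψ' θ|) (Set.Ioc 0 (2*π)) volume :=
    (hφ.2.1 0 (2*π)).1.abs.add (hψ.2.1 0 (2*π)).1.abs
  have hFint : IntervalIntegrable F volume 0 (2*π) := by
    rw [intervalIntegrable_iff_integrableOn_Ioc_of_le hπ.le]
    exact hbint.mono' hFm (Filter.Eventually.of_forall hFbd)
  -- a.e. facts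
  have hne : ∀ᵐ θ : ℝ ∂(volume : Measure ℝ), θ ≠ 2*π := by
    rw [MeasureTheory.ae_iff]
    convert Real.volume_singleton (a := 2*π) using 2
    ext θ; simp
  have hne0 : ∀ᵐ θ : ℝ ∂(volume : Measure ℝ), θ ≠ 0 := by
    rw [MeasureTheory.ae_iff]
    convert Real.volume_singleton (a := 0) using 2
    ext θ; simp
  have hIoo : ∀ᵐ θ ∂(volume.restrict (Set.Ioc 0 (2*π))), θ ∈ Set.Ioo 0 (2*π) := by
    filter_upwards [ae_restrict_of_ae hne, ae_restrict_mem measurableSet_Ioc] with θ h2 h3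
    exact ⟨h3.1, lt_of_le_of_ne h3.2 h2⟩
  have hIooIcc : ∀ᵐ θ ∂(volume.restrict (Set.Icc 0 (2*π))), θ ∈ Set.Ioo 0 (2*π) := by
    filter_upwards [ae_restrict_of_ae hne, ae_restrict_of_ae hne0, ae_restrict_mem measurableSet_Icc] with θ h2 h0 h3
    exact ⟨lt_of_le_of_ne h3.1 (Ne.symm h0), lt_of_le_of_ne h3.2 h2⟩
  have hle : (fun θ => G θ) ≤ᵐ[volume.restrict (Set.Ioc 0 (2*π))] F := by
    filter_upwards [ae_restrict_of_ae hpos, hIoo] with θ h1 h3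
    exact normA (φ' θ) (ψ' θ) (φ θ) (ψ θ) (h1 h3).le
  have hleIcc : G ≤ᵐ[volume.restrict (Set.Icc 0 (2*π))] F := by
    filter_upwards [ae_restrict_of_ae hpos, hIooIcc] with θ h1 h3
    exact normA (φ' θ) (ψ' θ) (φ θ) (ψ θ) (h1 h3).le
  have hweak : 2 * π * ((d₂:ℝ) - d₁) ≤ dist11 φ φ' ψ ψ' := by
    rw [dist11, ← hGval]
    exact intervalIntegral.integral_mono_ae_restrict hπ.le hGint hFint hleIcc
  rcases lt_or_eq_of_le hweak with h | h
  · exact h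
  exfalso
  -- equality case
  have hIocInt : ∀ {f : ℝ → ℝ}, IntervalIntegrable f volume 0 (2*π) → IntegrableOn f (Set.Ioc 0 (2*π)) volume := by
    intro f hf; exact (intervalIntegrable_iff_integrableOn_Ioc_of_le hπ.le).1 hf
  have heqI : (∫ θ in Set.Ioc 0 (2*π), (F θ - G θ)) = 0 := by
    rw [MeasureTheory.integral_sub (hIocInt hFint) (hIocInt hGint)]
    have e1 : (∫ θ in Set.Ioc 0 (2*π), F θ) = dist11 φ φ' ψ ψ' := by
      rw [dist11, intervalIntegral.integral_of_le hπ.le]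
    have e2 : (∫ θ in Set.Ioc 0 (2*π), G θ) = 2 * π * ((d₂:ℝ) - d₁) := by
      rw [← hGval, intervalIntegral.integral_of_le hπ.le]
    rw [e1, e2, ← h]; ring
  have hFG : (fun θ => F θ - G θ) =ᵐ[volume.restrict (Set.Ioc 0 (2*π))] 0 := by
    refine (MeasureTheory.integral_eq_zero_iff_of_nonneg_ae ?_ ((hIocInt hFint).sub (hIocInt hGint))).1 heqI
    filter_upwards [hle] with θ hθ
    simpa using hθ
  -- cos = 1 a.e. on Ioo
  have hcos : ∀ᵐ θ ∂(volume : Measure ℝ), θ ∈ Set.Ioc 0 (2*π) → Real.cos (ψ θ - φ θ) = 1 := by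
    refine MeasureTheory.ae_imp_of_ae_restrict ?_
    filter_upwards [hFG, ae_restrict_of_ae hpos, hIoo] with θ hθ hp hIoo'
    have hEq : F θ = G θ := by have := hθ; simp at this; linarith [this]
    exact normB (φ' θ) (ψ' θ) (φ θ) (ψ θ) (hp hIoo') hEq
  -- T closed containing Ioo a.e. hence Icc
  set T : Set ℝ := {θ | Real.cos (ψ θ - φ θ) = 1} with hT
  have hTc : IsClosed T := isClosed_eq (Real.continuous_cos.comp (hψc.sub hφc)) continuous_const
  have hUnull : volume (Set.Ioo 0 (2*π) \ T) = 0 := by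
    rw [MeasureTheory.ae_iff] at hcos
    refine measure_mono_null ?_ hcos
    rintro θ ⟨h1, h2⟩
    simp only [Set.mem_setOf_eq]
    exact fun hh => h2 (hh ⟨h1.1, h1.2.le⟩)
  have hUopen : IsOpen (Set.Ioo 0 (2*π) \ T) := isOpen_Ioo.sdiff hTc
  have hsub : Set.Ioo 0 (2*π) ⊆ T := by
    intro θ hθ
    by_contra hc
    have hne' : (Set.Ioo 0 (2*π) \ T).Nonempty := ⟨θ, hθ, hc⟩
    exact absurd hUnull (hUopen.measure_pos volume hne').ne'
  have hIcc : Set.Icc 0 (2*π) ⊆ T := by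
    have : closure (Set.Ioo 0 (2*π)) = Set.Icc 0 (2*π) := closure_Ioo hπ.ne
    rw [← this]
    exact closure_minimal hsub hTc
  -- IVT contradiction
  set δ : ℝ → ℝ := fun θ => ψ θ - φ θ with hδ
  have hδc : Continuous δ := hψc.sub hφc
  have hδ2π : δ (2*π) = δ 0 + 2*π*((d₂:ℝ) - d₁) := by
    have p1 := hψ.1 0
    have p2 := hφ.1 0
    simp only [zero_add] at p1 p2
    simp only [hδ, p1, p2]; ring
  have hdd : (1:ℝ) ≤ (d₂:ℝ) - d₁ := by
    have : (1:ℤ) ≤ d₂ - d₁ := by omega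
    exact_mod_cast this
  have hπpos := Real.pi_pos
  have hmem : δ 0 + π ∈ Set.Icc (δ 0) (δ (2*π)) := by
    constructor
    · linarith
    · rw [hδ2π]; nlinarith
  obtain ⟨θ, hθIcc, hθeq⟩ := intermediate_value_Icc hπ.le hδc.continuousOn hmem
  have h0T : Real.cos (δ 0) = 1 := hIcc ⟨le_refl 0, hπ.le⟩
  have hθT : Real.cos (δ θ) = 1 := hIcc hθIcc
  rw [Real.cos_eq_one_iff] at h0T hθT
  obtain ⟨k, hk⟩ := h0T
  obtain ⟨m, hm⟩ := hθT
  rw [hθeq] at hm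
  have hint : ((2*(m-k) : ℤ):ℝ) * π = 1 * π := by push_cast; linarith
  have := mul_right_cancel₀ Real.pi_ne_zero hint
  have : (2*(m-k) : ℤ) = 1 := by exact_mod_cast this
  omega

/-- If `0 < d₁ < d₂` and `f ∈ E_{d₁}` satisfies `f ∧ f' > 0` a.e. (i.e. `φ' > 0` a.e. on a
period), then `∫ |f' - g'| > 2π(d₂ - d₁)` for every `g ∈ E_{d₂}`; in particular the
infimum `2π(d₂ - d₁)` is not attained. -/
theorem stmt8 (d₁ d₂ : ℤ) (h₁ : 0 < d₁) (h₂ : d₁ < d₂) (φ φ' : ℝ → ℝ)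
    (hφ : MemE d₁ φ φ')
    (hpos : ∀ᵐ θ ∂(volume : Measure ℝ), θ ∈ Set.Ioo 0 (2 * π) → 0 < φ' θ) :
    (∀ ψ ψ' : ℝ → ℝ, MemE d₂ ψ ψ' →
      2 * π * ((d₂ : ℝ) - (d₁ : ℝ)) < dist11 φ φ' ψ ψ') ∧
    ¬ ∃ ψ ψ' : ℝ → ℝ, MemE d₂ ψ ψ' ∧
        dist11 φ φ' ψ ψ' = 2 * π * ((d₂ : ℝ) - (d₁ : ℝ)) := by
  refine ⟨fun ψ ψ' hψ => key d₁ d₂ h₁ h₂ φ φ' hφ hpos ψ ψ' hψ, ?_⟩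
  rintro ⟨ψ, ψ', hψ, heq⟩
  exact absurd heq (key d₁ d₂ h₁ h₂ φ φ' hφ hpos ψ ψ' hψ).ne'
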